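/- Any word in two letters A and B in which the letter B appears at most twice is nearly symmetric, i.e., it can be written as the juxtaposition of two symmetric words. -/

import Mathlib

private lemma allFalse (w : List Bool) (h : w.count true = 0) :
    w = List.replicate w.length false := by
  rw [List.eq_replicate_length]
  intro b hb
  by_contra hbne
  have : b = true := by cases b <;> simp_all
  subst this
  have := List.count_pos_iff.mpr hb
  omega

private lemma split_true (w : List Bool) (h : 0 < w.count true) :
    ∃ a w', w = List.replicate a false ++ true :: w' ∧
      w'.count true = w.count true - 1 := by
  induction w with
  | nil => simp at h
  | cons b t ih =>
    cases b with
    | true => exact ⟨0, t, by simp⟩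
    | false =>
      have h' : 0 < t.count true := by simpa using h
      obtain ⟨a, w', hw, hc⟩ := ih h'
      exact ⟨a + 1, w', by simp [hw, List.replicate_succ], by simpa [hw] using hc⟩

/-- A word in which the letter `B` (encoded `true`) appears at most twice is
nearly symmetric: it is a concatenation of two palindromes (one possibly empty). -/
theorem atMostTwoB_nearlySymmetric (w : List Bool) (h : w.count true ≤ 2) :
    ∃ S1 S2 : List Bool, S1.reverse = S1 ∧ S2.reverse = S2 ∧ w = S1 ++ S2 := by
  rcases Nat.lt_or_ge (w.count true) 1 with h0 | h1
  · -- no true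
    refine ⟨w, [], ?_, by simp, by simp⟩
    rw [allFalse w (by omega)]
    simp
  obtain ⟨a, v, hw, hcv⟩ := split_true w h1
  rcases Nat.lt_or_ge (v.count true) 1 with h0 | h1'
  · -- exactly one true: w = F^a ++ T :: F^b
    have hv : v = List.replicate v.length false := allFalse v (by omega)
    set b := v.length with hb
    rcases Nat.le_total a b with hab | hab
    · refine ⟨List.replicate a false ++ true :: List.replicate a false,
        List.replicate (b - a) false, ?_, by simp, ?_⟩
      · simp [List.reverse_append]
      · rw [hw, hv]
        have : b = a + (b - a) := by omega
        rw [this, List.replicate_add]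
        simp
    · refine ⟨List.replicate (a - b) false,
        List.replicate b false ++ true :: List.replicate b false, by simp, ?_, ?_⟩
      · simp [List.reverse_append]
      · rw [hw, hv]
        have : a = (a - b) + b := by omega
        conv_lhs => rw [this, List.replicate_add, List.append_assoc]
  · -- two trues: v = F^b ++ T :: F^c
    obtain ⟨b, u, hv, hcu⟩ := split_true v h1'
    have hu : u = List.replicate u.length false := allFalse u (by omega)
    set c := u.length with hc
    rcases Nat.le_total a c with hac | hac
    · refine ⟨List.replicate a false ++ true :: List.replicate b false ++
        true :: List.replicate a false, List.replicate (c - a) false, ?_, by simp, ?_⟩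
      · simp [List.reverse_append]
      · rw [hw, hv, hu]
        have : c = a + (c - a) := by omega
        rw [this, List.replicate_add]
        simp
    · refine ⟨List.replicate (a - c) false,
        List.replicate c false ++ true :: List.replicate b false ++
        true :: List.replicate c false, by simp, ?_, ?_⟩
      · simp [List.reverse_append]
      · rw [hw, hv, hu]
        have : a = (a - c) + c := by omega
        conv_lhs => rw [this, List.replicate_add, List.append_assoc]
        simp
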